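/- Among the degree sequences of k-uniform linear unicyclic hypergraphs with m ≥ 4 hyperedges that are not the sequence of C_3^(k) ⊙ S_{m-3}^(k), the sum of squared degrees is maximized by the sequence of C^{(k)}_{3;m-4,1,0}: one vertex of degree m-2, one vertex of degree 3, one vertex of degree 2, and all remaining m(k-1)-3 vertices of degree 1. -/

import Mathlib

section helpers

lemma all_one {α : Type*} [DecidableEq α] (s : Finset α) (f : α → ℕ)
    (h1 : ∀ i ∈ s, 1 ≤ f i) (h2 : ∑ i ∈ s, f i ≤ s.card) : ∀ i ∈ s, f i = 1 := by
  intro i hi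
  by_contra hne
  have hlt : ∑ _j ∈ s, 1 < ∑ j ∈ s, f j :=
    Finset.sum_lt_sum h1 ⟨i, hi, by have := h1 i hi; omega⟩
  simp at hlt
  omega

lemma mapEq {n : ℕ} (d : Fin n → ℕ) (i₀ i₁ i₂ : Fin n)
    (h10 : i₁ ≠ i₀) (h20 : i₂ ≠ i₀) (h21 : i₂ ≠ i₁)
    (hrest : ∀ j : Fin n, j ≠ i₀ → j ≠ i₁ → j ≠ i₂ → d j = 1) :
    Finset.univ.val.map d = d i₀ ::ₘ d i₁ ::ₘ d i₂ ::ₘ Multiset.replicate (n - 3) 1 := by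
  classical
  set s₁ := Finset.univ.erase i₀ with hs₁
  set s₂ := s₁.erase i₁ with hs₂
  set s₃ := s₂.erase i₂ with hs₃
  have m1 : i₁ ∈ s₁ := Finset.mem_erase.2 ⟨h10, Finset.mem_univ _⟩
  have m2 : i₂ ∈ s₂ := Finset.mem_erase.2 ⟨h21, Finset.mem_erase.2 ⟨h20, Finset.mem_univ _⟩⟩
  have e0 : (Finset.univ : Finset (Fin n)).val = i₀ ::ₘ s₁.val := by
    rw [hs₁, Finset.erase_val]
    exact (Multiset.cons_erase (by simp)).symm
  have e1 : s₁.val = i₁ ::ₘ s₂.val := by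
    rw [hs₂, Finset.erase_val]
    exact (Multiset.cons_erase (by exact_mod_cast m1)).symm
  have e2 : s₂.val = i₂ ::ₘ s₃.val := by
    rw [hs₃, Finset.erase_val]
    exact (Multiset.cons_erase (by exact_mod_cast m2)).symm
  have hcard : s₃.card = n - 3 := by
    rw [hs₃, Finset.card_erase_of_mem m2, hs₂, Finset.card_erase_of_mem m1, hs₁,
      Finset.card_erase_of_mem (Finset.mem_univ _), Finset.card_univ, Fintype.card_fin]
    omega
  have e3 : s₃.val.map d = Multiset.replicate (n - 3) 1 := by
    rw [Multiset.eq_replicate]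
    constructor
    · simpa using hcard
    · intro b hb
      obtain ⟨j, hj, rfl⟩ := Multiset.mem_map.1 hb
      have hj' : j ∈ s₃ := hj
      rw [hs₃, Finset.mem_erase, hs₂, Finset.mem_erase, hs₁, Finset.mem_erase] at hj'
      exact hrest j hj'.2.2.1 hj'.2.1 hj'.1
  rw [e0, Multiset.map_cons, e1, Multiset.map_cons, e2, Multiset.map_cons, e3]

lemma facB (B : ℤ) (h3 : 3 ≤ B) : 0 ≤ (B-3)*(2*B-7) := by
  rcases eq_or_lt_of_le h3 with h | h
  · rw [← h]; norm_num
  · exact mul_nonneg (by linarith) (by linarith)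

lemma arith2 (a N A B E1 E2 Q : ℤ) (h1 : E2 + (N+2)*B ≤ (B+1)*E1)
    (h2 : A + E1 = N + a + 5) (h3 : 3 ≤ B) (h4 : B ≤ A) (h5 : A + B ≤ a + 2)
    (hQ : Q = A^2 + E2) : Q ≤ a^2 + N + 12 := by
  nlinarith [facB B h3,
    mul_nonneg (by linarith : (0:ℤ) ≤ a+2-A-B) (by linarith : (0:ℤ) ≤ 3*B-7+(a+3-A-B)),
    mul_nonneg (by linarith : (0:ℤ) ≤ A-B) (by linarith : (0:ℤ) ≤ B-3+(a+3-A-B))]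

lemma arith3 (a N A E1 E2 Q : ℤ) (h1 : E2 + (N+2)*2 ≤ 3*E1)
    (h2 : A + E1 = N + a + 5) (h4 : 2 ≤ A) (h5 : A ≤ a)
    (hQ : Q = A^2 + E2) : Q ≤ a^2 + N + 12 := by
  nlinarith [mul_nonneg (by linarith : (0:ℤ) ≤ a - A) (by linarith : (0:ℤ) ≤ a + A - 3)]

lemma arith4 (a A B : ℤ) (h2 : A + B = a + 3) (h3 : 3 ≤ B) (h4 : B ≤ A) :
    A^2 + B^2 ≤ a^2 + 9 := by
  nlinarith [mul_nonneg (by linarith : (0:ℤ) ≤ B - 3) (by linarith : (0:ℤ) ≤ a - B)]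

lemma arith5 (a A B : ℤ) (h2 : A + B = a + 3) (h3 : 3 ≤ B) (h4 : B ≤ A)
    (heq : A^2 + B^2 = a^2 + 9) : B = 3 := by
  have h0 : (B-3)*(a-B) = 0 := by nlinarith
  rcases mul_eq_zero.1 h0 with h | h
  · linarith
  · have : B = a := by linarith
    omega

lemma termIneq (x b : ℕ) (h1 : 1 ≤ x) (h2 : x ≤ b) : x^2 + b ≤ (b+1)*x := by
  zify
  nlinarith [mul_nonneg (by omega : (0:ℤ) ≤ (x:ℤ)-1) (by omega : (0:ℤ) ≤ (b:ℤ)-(x:ℤ))]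

end helpers

/-- Among degree sequences of `k`-uniform linear unicyclic hypergraphs with `m ≥ 4`
hyperedges other than that of `C₃^{(k)} ⊙ S_{m-3}^{(k)}`, the sum of squares is
maximized by the sequence of `C^{(k)}_{3;m-4,1,0}`: one vertex of degree `m-2`,
one of degree `3`, one of degree `2`, and `m(k-1)-3` of degree `1`. -/
theorem stmt_16 (m k : ℕ) (hm : 4 ≤ m) (hk : 2 ≤ k)
    (d : Fin (m * (k - 1)) → ℕ) (hpos : ∀ i, 1 ≤ d i)
    (hsum : ∑ i, d i = m * k)
    (hcyc : 3 ≤ (Finset.univ.filter fun i => 2 ≤ d i).card)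
    (hnot : Finset.univ.val.map d
      ≠ (m - 1) ::ₘ 2 ::ₘ 2 ::ₘ Multiset.replicate (m * (k - 1) - 3) 1) :
    ∑ i, (d i) ^ 2 ≤ (m - 2) ^ 2 + 3 ^ 2 + 2 ^ 2 + (m * (k - 1) - 3) ∧
    (∑ i, (d i) ^ 2 = (m - 2) ^ 2 + 3 ^ 2 + 2 ^ 2 + (m * (k - 1) - 3) ↔
      Finset.univ.val.map d
        = (m - 2) ::ₘ 3 ::ₘ 2 ::ₘ Multiset.replicate (m * (k - 1) - 3) 1) := by
  classical
  have hn4 : 4 ≤ m * (k - 1) := le_trans hm (Nat.le_mul_of_pos_right m (by omega))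
  have hmk : m * k = m * (k - 1) + m := by
    have h : k - 1 + 1 = k := by omega
    calc m * k = m * ((k-1) + 1) := by rw [h]
    _ = m * (k-1) + m := by ring
  revert hn4 hmk hnot hcyc hsum hpos d
  generalize m * (k - 1) = n
  intro d hpos hsum hcyc hnot hn4 hmk
  have hsum' : ∑ i, d i = n + m := by rw [hsum, hmk]
  clear hsum hmk
  set a := m - 2 with haa
  have ham : m = a + 2 := by omega
  have ha2 : 2 ≤ a := by omega
  set N := n - 3 with hNN
  have hNn : n = N + 3 := by omega
  -- indices
  have hne : (Finset.univ : Finset (Fin n)).Nonempty := ⟨⟨0, by omega⟩, Finset.mem_univ _⟩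
  obtain ⟨i₀, -, hi₀⟩ := Finset.exists_max_image Finset.univ d hne
  set s₁ := Finset.univ.erase i₀ with hs₁def
  have hcard1 : s₁.card = n - 1 := by
    rw [hs₁def, Finset.card_erase_of_mem (Finset.mem_univ _), Finset.card_univ, Fintype.card_fin]
  have hs₁ne : s₁.Nonempty := Finset.card_pos.1 (by omega)
  obtain ⟨i₁, hi₁mem, hi₁⟩ := Finset.exists_max_image s₁ d hs₁ne
  have h10 : i₁ ≠ i₀ := (Finset.mem_erase.1 hi₁mem).1
  set s₂ := s₁.erase i₁ with hs₂def
  have hcard2 : s₂.card = n - 2 := by rw [hs₂def, Finset.card_erase_of_mem hi₁mem]; omega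
  have hFe : 0 < (((Finset.univ.filter fun i => 2 ≤ d i).erase i₀).erase i₁).card := by
    have h1 := Finset.pred_card_le_card_erase
      (s := Finset.univ.filter fun i => 2 ≤ d i) (a := i₀)
    have h2 := Finset.pred_card_le_card_erase
      (s := (Finset.univ.filter fun i => 2 ≤ d i).erase i₀) (a := i₁)
    omega
  obtain ⟨i₂, hi₂mem⟩ := Finset.card_pos.1 hFe
  have h21 : i₂ ≠ i₁ := (Finset.mem_erase.1 hi₂mem).1
  have h20 : i₂ ≠ i₀ := (Finset.mem_erase.1 (Finset.mem_erase.1 hi₂mem).2).1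
  have hd2 : 2 ≤ d i₂ :=
    (Finset.mem_filter.1 (Finset.mem_erase.1 (Finset.mem_erase.1 hi₂mem).2).2).2
  have hi₂s₁ : i₂ ∈ s₁ := Finset.mem_erase.2 ⟨h20, Finset.mem_univ _⟩
  have hi₂s₂ : i₂ ∈ s₂ := Finset.mem_erase.2 ⟨h21, hi₂s₁⟩
  set s₃ := s₂.erase i₂ with hs₃def
  have hcard3 : s₃.card = n - 3 := by rw [hs₃def, Finset.card_erase_of_mem hi₂s₂]; omega
  set A := d i₀ with hA
  set B := d i₁ with hB
  have hBA : B ≤ A := hi₀ i₁ (Finset.mem_univ _)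
  have hB2 : 2 ≤ B := le_trans hd2 (hi₁ i₂ hi₂s₁)
  -- sums
  set E1 := ∑ j ∈ s₁, d j with hE1
  set E2 := ∑ j ∈ s₁, d j ^ 2 with hE2
  set S2 := ∑ j ∈ s₂, d j with hS2
  set S3 := ∑ j ∈ s₃, d j with hS3
  set Q := ∑ i, d i ^ 2 with hQ
  have hsplit1 : A + E1 = n + m := by
    rw [hA, hE1, hs₁def, Finset.add_sum_erase _ d (Finset.mem_univ i₀), hsum']
  have hsplit2 : B + S2 = E1 := by
    rw [hB, hS2, hs₂def, hE1, Finset.add_sum_erase _ d hi₁mem]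
  have hsplit3 : d i₂ + S3 = S2 := by
    rw [hS3, hs₃def, hS2, Finset.add_sum_erase _ d hi₂s₂]
  have hS3card : n - 3 ≤ S3 := by
    have h := Finset.sum_le_sum (f := fun _ => 1) (g := d) (fun j (_ : j ∈ s₃) => hpos j)
    simp only [Finset.sum_const, smul_eq_mul, mul_one] at h
    omega
  have hsq1 : A^2 + E2 = Q := by
    rw [hA, hE2, hQ, hs₁def, Finset.add_sum_erase _ (fun i => d i ^ 2) (Finset.mem_univ i₀)]
  have hsq2 : B^2 + ∑ j ∈ s₂, d j ^ 2 = E2 := by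
    rw [hB, hE2, hs₂def, Finset.add_sum_erase _ (fun i => d i ^ 2) hi₁mem]
  have hsq3 : d i₂ ^ 2 + ∑ j ∈ s₃, d j ^ 2 = ∑ j ∈ s₂, d j ^ 2 := by
    rw [hs₃def, Finset.add_sum_erase _ (fun i => d i ^ 2) hi₂s₂]
  have hAB : A + B ≤ a + 3 := by omega
  -- the bad configuration contradicts hnot
  have hbadcase : B = 2 → A = a + 1 → False := by
    intro hB2' hA'
    have hd₂2 : d i₂ = 2 := le_antisymm (hB2' ▸ hi₁ i₂ hi₂s₁) hd2
    have hS3v : S3 ≤ s₃.card := by omega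
    have hones := all_one s₃ d (fun j _ => hpos j) hS3v
    have hrest : ∀ j : Fin n, j ≠ i₀ → j ≠ i₁ → j ≠ i₂ → d j = 1 := by
      intro j hj0 hj1 hj2
      exact hones j (Finset.mem_erase.2 ⟨hj2, Finset.mem_erase.2 ⟨hj1,
        Finset.mem_erase.2 ⟨hj0, Finset.mem_univ _⟩⟩⟩)
    apply hnot
    rw [mapEq d i₀ i₁ i₂ h10 h20 h21 hrest, ← hA, ← hB, hA', hB2', hd₂2,
      show m - 1 = a + 1 from by omega, ← hNN]
  -- sum of squares bound over s₁
  have hsumle : E2 + s₁.card * B ≤ (B+1) * E1 := by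
    have h := Finset.sum_le_sum (f := fun j => d j ^ 2 + B) (g := fun j => (B+1) * d j)
      (fun j hj => termIneq (d j) B (hpos j) (hi₁ j hj))
    rw [Finset.sum_add_distrib, Finset.sum_const, smul_eq_mul, ← Finset.mul_sum] at h
    exact h
  have hc1 : s₁.card = N + 2 := by omega
  rw [hc1] at hsumle
  have main : Q ≤ a^2 + 13 + N ∧
      (Q = a^2 + 13 + N →
        Finset.univ.val.map d = a ::ₘ 3 ::ₘ 2 ::ₘ Multiset.replicate N 1) := by
    rcases (by omega : B = 2 ∨ 3 ≤ B) with hBc | hB3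
    · -- B = 2
      have hA2' : A ≤ a := by
        rcases (by omega : A ≤ a ∨ A = a + 1) with h | h
        · exact h
        · exact (hbadcase hBc h).elim
      rw [hBc] at hsumle
      have hQb : Q ≤ a^2 + N + 12 := by
        have hZ := arith3 (a:ℤ) (N:ℤ) (A:ℤ) (E1:ℤ) (E2:ℤ) (Q:ℤ)
          (by exact_mod_cast hsumle)
          (by exact_mod_cast (show A + E1 = N + a + 5 by omega))
          (by exact_mod_cast (show 2 ≤ A by omega))
          (by exact_mod_cast hA2')
          (by exact_mod_cast hsq1.symm)
        exact_mod_cast hZ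
      constructor
      · linarith
      · intro h; exfalso; linarith
    · -- B ≥ 3
      rcases (by omega : A + B ≤ a + 2 ∨ A + B = a + 3) with hc | hABeq
      · have hQb : Q ≤ a^2 + N + 12 := by
          have hZ := arith2 (a:ℤ) (N:ℤ) (A:ℤ) (B:ℤ) (E1:ℤ) (E2:ℤ) (Q:ℤ)
            (by exact_mod_cast hsumle)
            (by exact_mod_cast (show A + E1 = N + a + 5 by omega))
            (by exact_mod_cast hB3)
            (by exact_mod_cast hBA)
            (by exact_mod_cast hc)
            (by exact_mod_cast hsq1.symm)
          exact_mod_cast hZ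
        constructor
        · linarith
        · intro h; exfalso; linarith
      · -- A + B = a + 3 : exact structure forced
        have hd₂2 : d i₂ = 2 := by omega
        have hS3v : S3 = N := by omega
        have hones := all_one s₃ d (fun j _ => hpos j) (by omega)
        have hrest : ∀ j : Fin n, j ≠ i₀ → j ≠ i₁ → j ≠ i₂ → d j = 1 := by
          intro j hj0 hj1 hj2
          exact hones j (Finset.mem_erase.2 ⟨hj2, Finset.mem_erase.2 ⟨hj1,
            Finset.mem_erase.2 ⟨hj0, Finset.mem_univ _⟩⟩⟩)
        have hsq3' : ∑ j ∈ s₃, d j ^ 2 = N := by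
          rw [Finset.sum_congr rfl (fun j hj => by rw [hones j hj, one_pow])]
          simp only [Finset.sum_const, smul_eq_mul, mul_one, hcard3]
          exact hNN.symm
        have hd₂sq : d i₂ ^ 2 = 4 := by rw [hd₂2]; norm_num
        have hQval : Q = A^2 + B^2 + 4 + N := by
          rw [hsq3', hd₂sq] at hsq3
          linarith
        have hAB4 : A^2 + B^2 ≤ a^2 + 9 := by
          have hZ := arith4 (a:ℤ) (A:ℤ) (B:ℤ)
            (by exact_mod_cast hABeq) (by exact_mod_cast hB3) (by exact_mod_cast hBA)
          exact_mod_cast hZ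
        constructor
        · linarith
        · intro hQe
          have heq : A^2 + B^2 = a^2 + 9 := by linarith
          have hB3e : B = 3 := by
            have hZ := arith5 (a:ℤ) (A:ℤ) (B:ℤ)
              (by exact_mod_cast hABeq) (by exact_mod_cast hB3) (by exact_mod_cast hBA)
              (by exact_mod_cast heq)
            exact_mod_cast hZ
          have hAe : A = a := by omega
          rw [mapEq d i₀ i₁ i₂ h10 h20 h21 hrest, ← hA, ← hB, hAe, hB3e, hd₂2, ← hNN]
  -- backward direction computation
  have key3 : Finset.univ.val.map d = a ::ₘ 3 ::ₘ 2 ::ₘ Multiset.replicate N 1 →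
      Q = a^2 + 13 + N := by
    intro h
    have hQm : Q = ((Finset.univ.val.map d).map (fun x => x^2)).sum := by
      rw [hQ, Multiset.map_map]
      rfl
    rw [h] at hQm
    simp only [Multiset.map_cons, Multiset.sum_cons, Multiset.map_replicate,
      Multiset.sum_replicate, smul_eq_mul, mul_one, one_pow] at hQm
    rw [hQm]
    norm_num
    ring
  refine ⟨by have := main.1; linarith, ?_, ?_⟩
  · intro h
    exact main.2 (by linarith)
  · intro h
    have := key3 h
    linarith
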